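/- arXiv:2103.00341 — 2 statements merged into one kernel-verified Lean document; each statement's English description precedes it below -/
import Mathlib

section
/- In the Mycielski graph M(G), for non-isolated vertices v_i, v_j of G the distances satisfy: d(u, v'_i) = 1, d(u, v_i) = 2, d(v'_i, v'_j) = 2 for i ≠ j, d(v_i, v'_i) = 2, d(v_i, v'_j) = min(3, d_G(v_i, v_j)) for i ≠ j, and d(v_i, v_j) = min(4, d_G(v_i, v_j)). -/
open SimpleGraph

abbrev MycVert (V : Type) : Type := V ⊕ V ⊕ Unit

def mycAdj {V : Type} (G : SimpleGraph V) : MycVert V → MycVert V → Prop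
  | Sum.inl a, Sum.inl b => G.Adj a b
  | Sum.inl a, Sum.inr (Sum.inl b) => G.Adj a b
  | Sum.inr (Sum.inl a), Sum.inl b => G.Adj a b
  | Sum.inr (Sum.inl _), Sum.inr (Sum.inr _) => True
  | Sum.inr (Sum.inr _), Sum.inr (Sum.inl _) => True
  | _, _ => False

/-- The Mycielski graph of `G`: `Sum.inl v` are original vertices, `Sum.inr (Sum.inl v)`
their copies, and `Sum.inr (Sum.inr ())` is the root. -/
def mycielski {V : Type} (G : SimpleGraph V) : SimpleGraph (MycVert V) where
  Adj := mycAdj G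
  symm := by
    constructor
    rintro (a | a | a) (b | b | b) h <;>
      first | exact G.adj_symm h | trivial | exact h.elim
  loopless := by
    constructor
    rintro (a | a | a) h <;> first | exact G.irrefl h | exact h

def IterMycVert (V : Type) : ℕ → Type
  | 0 => V
  | t + 1 => MycVert (IterMycVert V t)

/-- The `t`-th iterated Mycielski graph. -/
def iterMycielski {V : Type} (G : SimpleGraph V) : (t : ℕ) → SimpleGraph (IterMycVert V t)
  | 0 => G
  | t + 1 => mycielski (iterMycielski G t)

instance iterMycVertFintype (V : Type) [Fintype V] : (t : ℕ) → Fintype (IterMycVert V t)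
  | 0 => inferInstanceAs (Fintype V)
  | t + 1 => letI := iterMycVertFintype V t
             inferInstanceAs (Fintype (MycVert (IterMycVert V t)))

/-- `f` is an `L(2,1)`-labeling of `G`. -/
def IsL21Labeling {V : Type} (G : SimpleGraph V) (f : V → ℕ) : Prop :=
  (∀ x y, G.Adj x y → 2 ≤ ((f x : ℤ) - (f y : ℤ)).natAbs) ∧
  (∀ x y, G.dist x y = 2 → f x ≠ f y)

/-- The `L(2,1)`-labeling number `λ(G)`: the least `k` such that `G` has an
`L(2,1)`-labeling with labels in `{0, …, k}`. -/
noncomputable def lambdaNumber {V : Type} (G : SimpleGraph V) : ℕ :=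
  sInf {k | ∃ f : V → ℕ, IsL21Labeling G f ∧ ∀ v, f v ≤ k}

/- ### Auxiliary lemmas -/

lemma le_edist_of {α : Type*} {H : SimpleGraph α} {x y : α} {n : ℕ∞}
    (h : ∀ w : H.Walk x y, n ≤ w.length) : n ≤ H.edist x y :=
  le_iInf h

lemma enat_two_le {e : ℕ∞} (h0 : e ≠ 0) (h1 : e ≠ 1) : 2 ≤ e := by
  match e with
  | ⊤ => exact le_top
  | (n : ℕ) =>
    have h0' : n ≠ 0 := by exact_mod_cast h0
    have h1' : n ≠ 1 := by exact_mod_cast h1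
    exact_mod_cast by omega

lemma two_le_edist {α : Type*} {H : SimpleGraph α} {x y : α}
    (hne : x ≠ y) (hadj : ¬ H.Adj x y) : 2 ≤ H.edist x y :=
  enat_two_le (by simp [edist_eq_zero_iff, hne]) (by simp [edist_eq_one_iff_adj, hadj])

lemma one_le_walk_length {α : Type*} {H : SimpleGraph α} {x y : α}
    (hne : x ≠ y) (w : H.Walk x y) : (1 : ℕ∞) ≤ w.length := by
  have : w.length ≠ 0 := fun h => hne (w.eq_of_length_eq_zero h)
  exact_mod_cast Nat.one_le_iff_ne_zero.mpr this

lemma two_le_walk_length {α : Type*} {H : SimpleGraph α} {x y : α}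
    (hne : x ≠ y) (hadj : ¬ H.Adj x y) (w : H.Walk x y) : (2 : ℕ∞) ≤ w.length :=
  le_trans (two_le_edist hne hadj) (edist_le w)

/-- Mycielski adjacency: original vertices -/
lemma mycAdj_inl_inl {V : Type} {G : SimpleGraph V} {a b : V} (h : G.Adj a b) :
    (mycielski G).Adj (Sum.inl a) (Sum.inl b) := h

lemma mycAdj_inl_inr {V : Type} {G : SimpleGraph V} {a b : V} (h : G.Adj a b) :
    (mycielski G).Adj (Sum.inl a) (Sum.inr (Sum.inl b)) := h

lemma mycAdj_inr_inl {V : Type} {G : SimpleGraph V} {a b : V} (h : G.Adj a b) :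
    (mycielski G).Adj (Sum.inr (Sum.inl a)) (Sum.inl b) := h

lemma mycAdj_prime_root {V : Type} {G : SimpleGraph V} {a : V} :
    (mycielski G).Adj (Sum.inr (Sum.inl a)) (Sum.inr (Sum.inr ())) := trivial

lemma mycAdj_root_prime {V : Type} {G : SimpleGraph V} {a : V} :
    (mycielski G).Adj (Sum.inr (Sum.inr ())) (Sum.inr (Sum.inl a)) := trivial

/-- Project a walk in `mycielski G` avoiding the root to a distance bound in `G`. -/
lemma proj_edist_le {V : Type} {G : SimpleGraph V} :
    ∀ {x y : MycVert V} (w : (mycielski G).Walk x y) (px py : V),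
      (x = Sum.inl px ∨ x = Sum.inr (Sum.inl px)) →
      (y = Sum.inl py ∨ y = Sum.inr (Sum.inl py)) →
      (Sum.inr (Sum.inr ()) ∉ w.support) →
      G.edist px py ≤ w.length := by
  intro x y w
  induction w with
  | nil =>
    intro px py hx hy _
    rcases hx with rfl | rfl <;> rcases hy with h | h <;>
      simp_all [edist_self]
  | @cons x b y h w ih =>
    intro px py hx hy hu
    rw [Walk.support_cons] at hu
    simp only [List.mem_cons, not_or] at hu
    obtain ⟨hux, huw⟩ := hu
    have hb : b ≠ Sum.inr (Sum.inr ()) := by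
      intro hb; exact huw (hb ▸ w.start_mem_support)
    obtain (a | a | ⟨⟩) := b
    · have hadj : G.Adj px a := by
        rcases hx with rfl | rfl <;> exact h
      calc G.edist px py ≤ G.edist px a + G.edist a py := G.edist_triangle
        _ ≤ 1 + w.length := by
            gcongr
            · exact (edist_eq_one_iff_adj.mpr hadj).le
            · exact ih a py (Or.inl rfl) hy huw
        _ = (Walk.cons h w).length := by
            rw [Walk.length_cons]
            push_cast
            ring
    · have hadj : G.Adj px a := by
        rcases hx with rfl | rfl
        · exact h
        · exact h.elim
      calc G.edist px py ≤ G.edist px a + G.edist a py := G.edist_triangle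
        _ ≤ 1 + w.length := by
            gcongr
            · exact (edist_eq_one_iff_adj.mpr hadj).le
            · exact ih a py (Or.inr rfl) hy huw
        _ = (Walk.cons h w).length := by
            rw [Walk.length_cons]
            push_cast
            ring
    · exact absurd rfl hb

/-- Lift a `G`-walk to an `mycielski G` walk between original vertices. -/
lemma walk_inl {V : Type} {G : SimpleGraph V} :
    ∀ {i j : V} (p : G.Walk i j),
      ∃ q : (mycielski G).Walk (Sum.inl i) (Sum.inl j), q.length = p.length
  | _, _, .nil => ⟨.nil, rfl⟩
  | _, _, .cons h p => by
      obtain ⟨q, hq⟩ := walk_inl p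
      exact ⟨.cons (mycAdj_inl_inl h) q, by simp [hq]⟩

/-- Lift a `G`-walk of positive length to a walk from `inl i` to the prime copy of `j`. -/
lemma walk_to_prime {V : Type} {G : SimpleGraph V} :
    ∀ {i j : V} (p : G.Walk i j), p.length ≠ 0 →
      ∃ q : (mycielski G).Walk (Sum.inl i) (Sum.inr (Sum.inl j)), q.length = p.length
  | _, _, .nil, hp => absurd rfl hp
  | _, _, .cons h .nil, _ => ⟨.cons (mycAdj_inl_inr h) .nil, by simp⟩
  | _, _, .cons h (.cons h2 p), _ => by
      obtain ⟨q, hq⟩ := walk_to_prime (.cons h2 p) (by simp)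
      exact ⟨.cons (mycAdj_inl_inl h) q, by simp [hq, Walk.length_cons]⟩

/-- Distances in the Mycielski graph `M(G)` for non-isolated vertices `v_i, v_j` of `G`:
`d(u, v'_i) = 1`, `d(u, v_i) = 2`, `d(v'_i, v'_j) = 2` for `i ≠ j`, `d(v_i, v'_i) = 2`,
`d(v_i, v'_j) = min 3 (d_G(v_i, v_j))` for `i ≠ j`, and `d(v_i, v_j) = min 4 (d_G(v_i, v_j))`. -/
theorem mycielski_edist {V : Type} (G : SimpleGraph V) (i j : V)
    (hi : ∃ w, G.Adj i w) (hj : ∃ w, G.Adj j w) :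
    (mycielski G).edist (Sum.inr (Sum.inr ())) (Sum.inr (Sum.inl i)) = 1 ∧
    (mycielski G).edist (Sum.inr (Sum.inr ())) (Sum.inl i) = 2 ∧
    (i ≠ j → (mycielski G).edist (Sum.inr (Sum.inl i)) (Sum.inr (Sum.inl j)) = 2) ∧
    (mycielski G).edist (Sum.inl i) (Sum.inr (Sum.inl i)) = 2 ∧
    (i ≠ j → (mycielski G).edist (Sum.inl i) (Sum.inr (Sum.inl j)) = min 3 (G.edist i j)) ∧
    (mycielski G).edist (Sum.inl i) (Sum.inl j) = min 4 (G.edist i j) := by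
  classical
  obtain ⟨wi, hwi⟩ := hi
  obtain ⟨wj, hwj⟩ := hj
  set M := mycielski G with hM
  set u0 : MycVert V := Sum.inr (Sum.inr ()) with hu0
  -- non-adjacency of root and original vertices
  have hnadj_root_inl : ∀ a : V, ¬ M.Adj u0 (Sum.inl a) := fun a h => h
  have hnadj_inl_root : ∀ a : V, ¬ M.Adj (Sum.inl a) u0 := fun a h => h
  -- d(u, v'_i) = 1
  have h1 : ∀ a : V, M.edist u0 (Sum.inr (Sum.inl a)) = 1 := fun a =>
    edist_eq_one_iff_adj.mpr mycAdj_root_prime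
  -- d(u, v_i) = 2 for non-isolated i
  have h2le : ∀ (a wa : V), G.Adj a wa → M.edist u0 (Sum.inl a) ≤ 2 := by
    intro a wa ha
    simpa using edist_le (G := M) (.cons (mycAdj_root_prime (a := wa)) (.cons (mycAdj_inr_inl ha.symm) .nil))
  have h2 : M.edist u0 (Sum.inl i) = 2 :=
    le_antisymm (h2le i wi hwi) (two_le_edist (by simp [hu0]) (hnadj_root_inl i))
  -- distance from inl a to root is ≥ 2, used repeatedly
  have hge2 : ∀ (a : V) (w : M.Walk (Sum.inl a) u0), (2 : ℕ∞) ≤ w.length := fun a w =>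
    two_le_walk_length (by simp [hu0]) (hnadj_inl_root a) w
  have hge2' : ∀ (a : V) (w : M.Walk u0 (Sum.inl a)), (2 : ℕ∞) ≤ w.length := fun a w =>
    two_le_walk_length (by simp [hu0]) (hnadj_root_inl a) w
  refine ⟨h1 i, h2, ?_, ?_, ?_, ?_⟩
  · -- d(v'_i, v'_j) = 2, i ≠ j
    intro hne
    apply le_antisymm
    · simpa using edist_le (G := M) (.cons (mycAdj_prime_root (a := i)) (.cons (mycAdj_root_prime (a := j)) .nil))
    · exact two_le_edist (by simp [hne]) (fun h => h)
  · -- d(v_i, v'_i) = 2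
    apply le_antisymm
    · simpa using edist_le (G := M) (.cons (mycAdj_inl_inl hwi) (.cons (mycAdj_inl_inr hwi.symm) .nil))
    · exact two_le_edist (by simp) (fun h => G.irrefl h)
  · -- d(v_i, v'_j) = min 3 d, i ≠ j
    intro hne
    apply le_antisymm
    · apply le_min
      · calc M.edist (Sum.inl i) (Sum.inr (Sum.inl j))
              ≤ M.edist (Sum.inl i) u0 + M.edist u0 (Sum.inr (Sum.inl j)) := M.edist_triangle
          _ ≤ 2 + 1 := add_le_add (SimpleGraph.edist_comm ▸ h2le i wi hwi) (h1 j).le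
          _ = 3 := by norm_num
      · rcases eq_or_ne (G.edist i j) ⊤ with htop | htop
        · rw [htop]; exact le_top
        · obtain ⟨p, hp⟩ := exists_walk_of_edist_ne_top htop
          have hp0 : p.length ≠ 0 := fun h0 => hne (p.eq_of_length_eq_zero h0)
          obtain ⟨q, hq⟩ := walk_to_prime p hp0
          calc M.edist (Sum.inl i) (Sum.inr (Sum.inl j)) ≤ q.length := edist_le q
            _ = G.edist i j := by rw [hq, hp]
    · apply le_edist_of
      intro w
      rcases Classical.em (u0 ∈ w.support) with hmem | hmem
      · have hsp := w.take_spec hmem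
        have hlen : w.length = (w.takeUntil u0 hmem).length + (w.dropUntil u0 hmem).length := by
          conv_lhs => rw [← hsp]
          exact Walk.length_append _ _
        have ht := hge2 i (w.takeUntil u0 hmem)
        have hd := one_le_walk_length (by simp [hu0]) (w.dropUntil u0 hmem)
        calc min 3 (G.edist i j) ≤ 3 := min_le_left _ _
          _ = 2 + 1 := by norm_num
          _ ≤ ((w.takeUntil u0 hmem).length : ℕ∞) + (w.dropUntil u0 hmem).length :=
              add_le_add ht hd
          _ = w.length := by rw [hlen]; push_cast; ring
      · calc min 3 (G.edist i j) ≤ G.edist i j := min_le_right _ _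
          _ ≤ w.length := proj_edist_le w i j (Or.inl rfl) (Or.inr rfl) (by rw [← hu0]; exact hmem)
  · -- d(v_i, v_j) = min 4 d
    apply le_antisymm
    · apply le_min
      · calc M.edist (Sum.inl i) (Sum.inl j)
              ≤ M.edist (Sum.inl i) u0 + M.edist u0 (Sum.inl j) := M.edist_triangle
          _ ≤ 2 + 2 := add_le_add (SimpleGraph.edist_comm ▸ h2le i wi hwi) (h2le j wj hwj)
          _ = 4 := by norm_num
      · rcases eq_or_ne (G.edist i j) ⊤ with htop | htop
        · rw [htop]; exact le_top
        · obtain ⟨p, hp⟩ := exists_walk_of_edist_ne_top htop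
          obtain ⟨q, hq⟩ := walk_inl p
          calc M.edist (Sum.inl i) (Sum.inl j) ≤ q.length := edist_le q
            _ = G.edist i j := by rw [hq, hp]
    · apply le_edist_of
      intro w
      rcases Classical.em (u0 ∈ w.support) with hmem | hmem
      · have hsp := w.take_spec hmem
        have hlen : w.length = (w.takeUntil u0 hmem).length + (w.dropUntil u0 hmem).length := by
          conv_lhs => rw [← hsp]
          exact Walk.length_append _ _
        have ht := hge2 i (w.takeUntil u0 hmem)
        have hd := hge2' j (w.dropUntil u0 hmem)
        calc min 4 (G.edist i j) ≤ 4 := min_le_left _ _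
          _ = 2 + 2 := by norm_num
          _ ≤ ((w.takeUntil u0 hmem).length : ℕ∞) + (w.dropUntil u0 hmem).length :=
              add_le_add ht hd
          _ = w.length := by rw [hlen]; push_cast; ring
      · calc min 4 (G.edist i j) ≤ G.edist i j := min_le_right _ _
          _ ≤ w.length := proj_edist_le w i j (Or.inl rfl) (Or.inl rfl) (by rw [← hu0]; exact hmem)
end

section
/- For every t ≥ 2 and every n ≥ 2, the L(2,1)-labeling number of the t-th iterated Mycielski of the complete graph K_n equals 2^t(n+1) - 2, i.e., one less than its number of vertices. -/
open SimpleGraph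

/-! ### Auxiliary lemmas -/

lemma card_iterMycVert (n t : ℕ) :
    Fintype.card (IterMycVert (Fin n) t) = 2 ^ t * (n + 1) - 1 := by
  induction t with
  | zero => simp [IterMycVert]; exact (Fintype.card_congr (Equiv.refl _)).trans (Fintype.card_fin n)
  | succ t ih =>
      have h1 : 1 ≤ 2 ^ t * (n + 1) := Nat.one_le_iff_ne_zero.mpr (by positivity)
      have h2 : 2 ^ (t + 1) * (n + 1) = 2 * (2 ^ t * (n + 1)) := by ring
      have h3 : Fintype.card (IterMycVert (Fin n) (t + 1)) =
          2 * Fintype.card (IterMycVert (Fin n) t) + 1 := by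
        show Fintype.card (MycVert (IterMycVert (Fin n) t)) = _
        simp [MycVert, Fintype.card_sum]
        ring
      rw [h3, ih]
      omega

/-- Common-neighbor / no-isolated-vertex properties are preserved by `mycielski`. -/
lemma myc_props {V : Type} (G : SimpleGraph V) (v₀ : V)
    (hQ : ∀ x, ∃ w, G.Adj x w)
    (hP : ∀ x y : V, x ≠ y → ¬G.Adj x y → ∃ w, G.Adj x w ∧ G.Adj w y) :
    (∀ x, ∃ w, (mycielski G).Adj x w) ∧
    (∀ x y : MycVert V, x ≠ y → ¬(mycielski G).Adj x y →
      ∃ w, (mycielski G).Adj x w ∧ (mycielski G).Adj w y) := by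
  constructor
  · rintro (a | a | a)
    · obtain ⟨w, hw⟩ := hQ a
      exact ⟨Sum.inl w, hw⟩
    · exact ⟨Sum.inr (Sum.inr ()), trivial⟩
    · exact ⟨Sum.inr (Sum.inl v₀), trivial⟩
  · rintro (a | a | a) (b | b | b) hne hadj
    · obtain ⟨w, hw1, hw2⟩ := hP a b (fun h => hne (congrArg _ h)) hadj
      exact ⟨Sum.inl w, hw1, hw2⟩
    · by_cases hab : a = b
      · subst hab
        obtain ⟨w, hw⟩ := hQ a
        exact ⟨Sum.inl w, hw, G.adj_symm hw⟩
      · obtain ⟨w, hw1, hw2⟩ := hP a b hab hadj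
        exact ⟨Sum.inl w, hw1, hw2⟩
    · obtain ⟨w, hw⟩ := hQ a
      exact ⟨Sum.inr (Sum.inl w), hw, trivial⟩
    · by_cases hab : a = b
      · subst hab
        obtain ⟨w, hw⟩ := hQ a
        exact ⟨Sum.inl w, hw, G.adj_symm hw⟩
      · obtain ⟨w, hw1, hw2⟩ := hP a b hab hadj
        exact ⟨Sum.inl w, hw1, hw2⟩
    · exact ⟨Sum.inr (Sum.inr ()), trivial, trivial⟩
    · exact absurd trivial hadj
    · obtain ⟨w, hw⟩ := hQ b
      exact ⟨Sum.inr (Sum.inl w), trivial, G.adj_symm hw⟩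
    · exact absurd trivial hadj
    · exact absurd rfl hne

lemma iter_props (n t : ℕ) (hn : 2 ≤ n) :
    (∀ x, ∃ w, (iterMycielski (⊤ : SimpleGraph (Fin n)) t).Adj x w) ∧
    (∀ x y, x ≠ y → ¬(iterMycielski (⊤ : SimpleGraph (Fin n)) t).Adj x y →
      ∃ w, (iterMycielski (⊤ : SimpleGraph (Fin n)) t).Adj x w ∧
           (iterMycielski (⊤ : SimpleGraph (Fin n)) t).Adj w y) := by
  have hnz : 0 < n := by omega
  induction t with
  | zero =>
      refine ⟨fun x => ?_, fun x y hne hadj => absurd hne hadj⟩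
      obtain ⟨w, hw⟩ := Fintype.exists_ne_of_one_lt_card
        (by have := card_iterMycVert n 0; omega) x
      exact ⟨w, Ne.symm hw⟩
  | succ t ih =>
      have v₀ : IterMycVert (Fin n) t := by
        clear ih
        induction t with
        | zero => exact (⟨0, hnz⟩ : Fin n)
        | succ t ih => exact Sum.inr (Sum.inr ())
      exact myc_props _ v₀ ih.1 ih.2

/-- A "good labeling": witnesses a Hamiltonian path of the complement. -/
def Good {V : Type} (G : SimpleGraph V) (m : ℕ) : Prop :=
  ∃ g : V → ℕ, Function.Injective g ∧ (∀ v, g v < m) ∧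
    (∀ a b, g a + 1 = g b → ¬G.Adj a b)

lemma good_step {V : Type} (G : SimpleGraph V) (m : ℕ) (hm : 1 ≤ m)
    (h : Good G m) : Good (mycielski G) (2 * m + 1) := by
  obtain ⟨g, hinj, hlt, hC⟩ := h
  refine ⟨fun x => match x with
    | Sum.inl a => g a + 1
    | Sum.inr (Sum.inl a) => 2 * m - g a
    | Sum.inr (Sum.inr _) => 0, ?_, ?_, ?_⟩
  · rintro (a | a | a) (b | b | b) h <;> simp only at h
    · exact congrArg _ (hinj (by omega))
    · exact absurd h (by have := hlt a; have := hlt b; omega)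
    · exact absurd h (by omega)
    · exact absurd h (by have := hlt a; have := hlt b; omega)
    · have := hlt a; have := hlt b
      exact congrArg _ (congrArg _ (hinj (by omega)))
    · exact absurd h (by have := hlt a; omega)
    · exact absurd h (by omega)
    · exact absurd h (by have := hlt b; omega)
    · rfl
  · rintro (a | a | a) <;> simp only
    · have := hlt a; omega
    · have := hlt a; omega
    · omega
  · rintro (a | a | a) (b | b | b) h hadj <;> simp only at h
    · exact hC a b (by omega) hadj
    · have ha := hlt a; have hb := hlt b
      have hab : a = b := hinj (by omega)
      subst hab
      exact G.irrefl hadj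
    · omega
    · have := hlt a; have := hlt b; omega
    · exact hadj
    · have := hlt a; omega
    · exact hadj
    · have := hlt b; omega
    · exact hadj

/-- Base case: a good labeling of `M²(K_n)`. -/
lemma good_base (n : ℕ) (hn : 2 ≤ n) :
    Good (mycielski (mycielski (⊤ : SimpleGraph (Fin n)))) (4 * n + 3) := by
  refine ⟨fun x => match x with
    | Sum.inl (Sum.inl i) => 4 * (i : ℕ) + 1
    | Sum.inl (Sum.inr (Sum.inl i)) => 4 * (i : ℕ) + 2
    | Sum.inl (Sum.inr (Sum.inr _)) => 4 * n + 1
    | Sum.inr (Sum.inl (Sum.inl i)) => 4 * (i : ℕ)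
    | Sum.inr (Sum.inl (Sum.inr (Sum.inl i))) => 4 * (i : ℕ) + 3
    | Sum.inr (Sum.inl (Sum.inr (Sum.inr _))) => 4 * n
    | Sum.inr (Sum.inr _) => 4 * n + 2, ?_, ?_, ?_⟩
  · rintro ((i | i | ⟨⟩) | (i | i | ⟨⟩) | ⟨⟩) ((j | j | ⟨⟩) | (j | j | ⟨⟩) | ⟨⟩) h <;>
      simp only at h <;>
      first
        | rfl
        | (exfalso; have hi := i.isLt; have hj := j.isLt; omega)
        | (exfalso; have hi := i.isLt; omega)
        | (exfalso; have hj := j.isLt; omega)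
        | (exfalso; omega)
        | (have hij : (i : ℕ) = (j : ℕ) := by omega
           have hij' : i = j := Fin.ext hij
           subst hij'; rfl)
  · rintro ((i | i | ⟨⟩) | (i | i | ⟨⟩) | ⟨⟩) <;> simp only <;>
      first | (have := i.isLt; omega) | omega
  · rintro ((i | i | ⟨⟩) | (i | i | ⟨⟩) | ⟨⟩) ((j | j | ⟨⟩) | (j | j | ⟨⟩) | ⟨⟩) h hadj <;>
      simp only at h <;>
      first
        | exact hadj
        | (have hi := i.isLt; have hj := j.isLt; omega)
        | (have hi := i.isLt; omega)
        | (have hj := j.isLt; omega)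
        | omega
        | (have hij : (i : ℕ) = (j : ℕ) := by omega
           exact hadj (Fin.ext hij))

lemma good_iter (n t : ℕ) (hn : 2 ≤ n) (ht : 2 ≤ t) :
    Good (iterMycielski (⊤ : SimpleGraph (Fin n)) t) (2 ^ t * (n + 1) - 1) := by
  obtain ⟨s, rfl⟩ : ∃ s, t = 2 + s := ⟨t - 2, by omega⟩
  clear ht
  induction s with
  | zero =>
      have h0 : 2 ^ 2 * (n + 1) = 4 * n + 4 := by ring
      have h : 2 ^ 2 * (n + 1) - 1 = 4 * n + 3 := by omega
      rw [h]
      exact good_base n hn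
  | succ s ih =>
      have hp : 1 ≤ 2 ^ (2 + s) := Nat.one_le_two_pow
      have h1 : 2 ≤ 2 ^ (2 + s) * (n + 1) := by nlinarith
      have step := good_step _ _ (by omega) ih
      have h2 : 2 ^ (2 + (s + 1)) * (n + 1) = 2 * (2 ^ (2 + s) * (n + 1)) := by ring
      have h3 : 2 * (2 ^ (2 + s) * (n + 1) - 1) + 1 = 2 ^ (2 + (s + 1)) * (n + 1) - 1 := by
        omega
      rw [h3] at step
      exact step

/-- For every `t ≥ 2` and `n ≥ 2`, `λ(M^t(K_n)) = 2^t(n+1) - 2`, one less than its number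
of vertices. -/
theorem lambdaNumber_iterMycielski_completeGraph (n t : ℕ) (hn : 2 ≤ n) (ht : 2 ≤ t) :
    lambdaNumber (iterMycielski (⊤ : SimpleGraph (Fin n)) t) = 2 ^ t * (n + 1) - 2 := by
  set G := iterMycielski (⊤ : SimpleGraph (Fin n)) t with hG
  have hcard : Fintype.card (IterMycVert (Fin n) t) = 2 ^ t * (n + 1) - 1 :=
    card_iterMycVert n t
  have hN : 4 ≤ 2 ^ t := by
    calc (4 : ℕ) = 2 ^ 2 := by norm_num
    _ ≤ 2 ^ t := Nat.pow_le_pow_right (by norm_num) ht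
  have hNbig : 11 ≤ 2 ^ t * (n + 1) - 1 := by
    have h12 : 12 ≤ 2 ^ t * (n + 1) := by nlinarith [hN, hn]
    omega
  obtain ⟨g, hinj, hlt, hC⟩ := good_iter n t hn ht
  have hmem : (2 ^ t * (n + 1) - 2) ∈
      {k | ∃ f, IsL21Labeling G f ∧ ∀ v, f v ≤ k} := by
    refine ⟨g, ⟨?_, ?_⟩, ?_⟩
    · intro x y hxy
      have h1 : g x ≠ g y := fun h => (G.ne_of_adj hxy) (hinj h)
      have h2 : g x + 1 ≠ g y := fun h => hC x y h hxy
      have h3 : g y + 1 ≠ g x := fun h => hC y x h (G.adj_symm hxy)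
      omega
    · intro x y hd h
      have hxy : x ≠ y := by
        intro he; subst he
        rw [(G.dist_self : G.dist x x = 0)] at hd
        omega
      exact hxy (hinj h)
    · intro v
      have := hlt v
      omega
  have hlb : ∀ k ∈ {k | ∃ f, IsL21Labeling G f ∧ ∀ v, f v ≤ k},
      2 ^ t * (n + 1) - 2 ≤ k := by
    rintro k ⟨f, ⟨hf1, hf2⟩, hfk⟩
    obtain ⟨hQ, hP⟩ := iter_props n t hn
    have hfinj : Function.Injective f := by
      intro x y hfxy
      by_contra hne
      by_cases hadj : G.Adj x y
      · have := hf1 x y hadj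
        rw [hfxy] at this
        simp at this
      · obtain ⟨w, hw1, hw2⟩ := hP x y hne hadj
        have hdle : G.dist x y ≤ 2 := by
          have := SimpleGraph.dist_le ((Walk.cons hw1 (Walk.cons hw2 Walk.nil)) : G.Walk x y)
          simpa using this
        have hd0 : G.dist x y ≠ 0 := by
          intro h0
          rcases SimpleGraph.dist_eq_zero_iff_eq_or_not_reachable.mp h0 with h | h
          · exact hne h
          · exact h ⟨Walk.cons hw1 (Walk.cons hw2 Walk.nil)⟩
        have hd1 : G.dist x y ≠ 1 := fun h =>
          hadj (SimpleGraph.dist_eq_one_iff_adj.mp h)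
        exact hf2 x y (by omega) hfxy
    have hcardle : Fintype.card (IterMycVert (Fin n) t) ≤ k + 1 := by
      have hinj2 : Function.Injective
          (fun v => (⟨f v, by have := hfk v; omega⟩ : Fin (k + 1))) := by
        intro a b hab
        exact hfinj (congrArg Fin.val hab)
      simpa using Fintype.card_le_of_injective _ hinj2
    omega
  exact le_antisymm (Nat.sInf_le hmem) (le_csInf ⟨_, hmem⟩ hlb)
end
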